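/- Let Γ be a finitely generated group and suppose the characters of Γ' corresponding to one-dimensional quotients of a finite-dimensional module are defined over the ring of integers O_K of a number field K. If a finite set S of characters Γ → C* is stable under Aut(C), takes values in O_K* after every embedding K ↪ C, and consists of unitary characters, then S consists of torsion characters. -/

import Mathlib

open NumberField IntermediateField

open Cardinal in
/-- Auxiliary: the ring equivalence between two algebraically closed fields built from
equipotent transcendence bases over a common base ring, as an algebra-compatible map. -/
noncomputable def myTBEquiv {R : Type} [CommRing R] {K L : Type} [Field K] [Field L]
    [Algebra R K] [Algebra R L] [IsAlgClosed K] [IsAlgClosed L]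
    {ι κ : Type} {v : ι → K} {w : κ → L} (e : ι ≃ κ)
    (hv : IsTranscendenceBasis R v) (hw : IsTranscendenceBasis R w) : K ≃+* L :=
  letI := IsAlgClosed.isAlgClosure_of_transcendence_basis v hv
  letI := IsAlgClosed.isAlgClosure_of_transcendence_basis w hw
  IsAlgClosure.equivOfEquiv K L
    ((hv.1.aevalEquiv.symm.trans
      ((MvPolynomial.renameEquiv R e).trans hw.1.aevalEquiv)).toRingEquiv)

theorem myTBEquiv_algebraMap {R : Type} [CommRing R] {K L : Type} [Field K] [Field L]
    [Algebra R K] [Algebra R L] [IsAlgClosed K] [IsAlgClosed L]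
    {ι κ : Type} {v : ι → K} {w : κ → L} (e : ι ≃ κ)
    (hv : IsTranscendenceBasis R v) (hw : IsTranscendenceBasis R w) (r : R) :
    myTBEquiv e hv hw (algebraMap R K r) = algebraMap R L r := by
  letI := IsAlgClosed.isAlgClosure_of_transcendence_basis v hv
  letI := IsAlgClosed.isAlgClosure_of_transcendence_basis w hw
  have h1 : algebraMap R K r = algebraMap (Algebra.adjoin R (Set.range v)) K
      (algebraMap R (Algebra.adjoin R (Set.range v)) r) :=
    IsScalarTower.algebraMap_apply R _ K r
  rw [myTBEquiv, h1, IsAlgClosure.equivOfEquiv_algebraMap]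
  erw [AlgEquiv.commutes]
  exact (IsScalarTower.algebraMap_apply R _ L r).symm

theorem exists_ringEquiv_of_card {E K L : Type} [Field E] [Countable E] [Field K] [Field L]
    [IsAlgClosed K] [IsAlgClosed L] [Algebra E K] [Algebra E L]
    (hK : Cardinal.aleph0 < Cardinal.mk K) (hKL : Cardinal.mk K = Cardinal.mk L) :
    ∃ σ : K ≃+* L, ∀ x : E, σ (algebraMap E K x) = algebraMap E L x := by
  obtain ⟨s, hs⟩ := exists_isTranscendenceBasis E K
  obtain ⟨t, ht⟩ := exists_isTranscendenceBasis E L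
  have hE : Cardinal.mk E ≤ Cardinal.aleph0 := Cardinal.mk_le_aleph0
  have h1 := IsAlgClosed.cardinal_eq_cardinal_transcendence_basis_of_aleph0_lt' _ hs hE hK
  have h2 := IsAlgClosed.cardinal_eq_cardinal_transcendence_basis_of_aleph0_lt' _ ht hE
    (hKL ▸ hK)
  obtain ⟨e⟩ := Cardinal.eq.1 (h1.symm.trans (hKL.trans h2))
  exact ⟨myTBEquiv e hs ht, fun x => myTBEquiv_algebraMap e hs ht x⟩

/-- Any two conjugate algebraic numbers in `ℂ` are related by a ring automorphism of `ℂ`. -/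
theorem exists_conj {a b : ℂ} (ha : IsIntegral ℚ a)
    (hb : Polynomial.aeval b (minpoly ℚ a) = 0) : ∃ σ : ℂ ≃+* ℂ, σ a = b := by
  haveI := IntermediateField.adjoin.finiteDimensional ha
  haveI : Countable ℚ⟮a⟯ :=
    Countable.of_equiv _ (Module.finBasis ℚ ℚ⟮a⟯).equivFun.toEquiv.symm
  let pb := IntermediateField.adjoin.powerBasis ha
  have hmin : minpoly ℚ pb.gen = minpoly ℚ a := by
    rw [IntermediateField.adjoin.powerBasis_gen]
    exact IntermediateField.minpoly_gen ℚ a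
  let g : ℚ⟮a⟯ →ₐ[ℚ] ℂ := pb.lift b (by convert hb using 2; exact hmin)
  obtain ⟨σ, hσ⟩ := @exists_ringEquiv_of_card ℚ⟮a⟯ ℂ ℂ _ _ _ _ _ _ _
    g.toRingHom.toAlgebra
    (by rw [Cardinal.mk_complex]; exact Cardinal.aleph0_lt_continuum) rfl
  refine ⟨σ, ?_⟩
  have h1 := hσ (IntermediateField.AdjoinSimple.gen ℚ a)
  rw [IntermediateField.AdjoinSimple.algebraMap_gen] at h1
  rw [RingHom.algebraMap_toAlgebra] at h1
  have h2 : g (IntermediateField.AdjoinSimple.gen ℚ a) = b := pb.lift_gen b _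
  exact h1.trans h2

/-- Let `Γ` be a finitely generated group and `K` a number field with ring of
integers `𝓞 K`.  If a finite set `S` of characters `Γ → ℂ*` is stable under
`Aut(ℂ)`, each character of `S` takes values in `𝓞 K*` after every embedding
`K ↪ ℂ`, and `S` consists of unitary characters, then `S` consists of torsion
characters. -/
theorem statement15 {Γ : Type} [Group Γ] (hfg : Group.FG Γ)
    {K : Type} [Field K] [NumberField K]
    (S : Set (Γ →* ℂˣ)) (hSfin : S.Finite)
    (hstable : ∀ ρ ∈ S, ∀ σ : ℂ ≃+* ℂ,
      (Units.map σ.toRingHom.toMonoidHom).comp ρ ∈ S)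
    (hint : ∀ ρ ∈ S, ∀ τ : K →+* ℂ, ∃ ψ : Γ →* (𝓞 K)ˣ,
      ∀ γ : Γ, (ρ γ : ℂ) = τ ((ψ γ : 𝓞 K) : K))
    (hunitary : ∀ ρ ∈ S, ∀ γ : Γ, ‖((ρ γ : ℂ))‖ = 1) :
    ∀ ρ ∈ S, IsOfFinOrder ρ := by
  intro ρ hρ
  -- Step 1: each value of `ρ` is a root of unity
  have key : ∀ γ : Γ, IsOfFinOrder (ρ γ) := by
    intro γ
    set τalg : K →ₐ[ℚ] ℂ := IsAlgClosed.lift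
    obtain ⟨ψ, hψ⟩ := hint ρ hρ τalg.toRingHom
    set x : K := ((ψ γ : 𝓞 K) : K) with hx
    have hxint : IsIntegral ℤ x := RingOfIntegers.isIntegral_coe (ψ γ : 𝓞 K)
    have hxQ : IsIntegral ℚ x := IsIntegral.of_finite ℚ x
    have hnorm : ∀ φ : K →+* ℂ, ‖φ x‖ = 1 := by
      intro φ
      have hτa : IsIntegral ℚ (τalg x) := hxQ.map τalg
      have hroot : Polynomial.aeval (φ x) (minpoly ℚ (τalg x)) = 0 := by
        rw [minpoly.algHom_eq τalg τalg.toRingHom.injective x]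
        have : φ x = φ.toRatAlgHom x := rfl
        rw [this, Polynomial.aeval_algHom_apply, minpoly.aeval, map_zero]
      obtain ⟨σ, hσ⟩ := exists_conj hτa hroot
      have habs := hunitary _ (hstable ρ hρ σ) γ
      have hval : (((Units.map σ.toRingHom.toMonoidHom).comp ρ) γ : ℂ) = φ x := by
        simp only [MonoidHom.comp_apply, Units.coe_map, RingHom.toMonoidHom_eq_coe,
          MonoidHom.coe_coe]
        rw [hψ γ, ← hσ]
        rfl
      rw [hval] at habs
      exact habs
    obtain ⟨n, hn, hxn⟩ := NumberField.Embeddings.pow_eq_one_of_norm_eq_one K ℂ hxint hnorm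
    refine isOfFinOrder_iff_pow_eq_one.mpr ⟨n, hn, ?_⟩
    have hcoe : ((ρ γ ^ n : ℂˣ) : ℂ) = 1 := by
      rw [Units.val_pow_eq_pow_val, hψ γ, ← map_pow, ← hx, hxn, map_one]
    exact Units.ext hcoe
  -- Step 2: finite generation gives finite order of `ρ`
  obtain ⟨T, hT⟩ := hfg.out
  set n : ℕ := ∏ g ∈ T, orderOf (ρ g) with hn
  have hnpos : 0 < n := Finset.prod_pos fun g _ => (key g).orderOf_pos
  refine isOfFinOrder_iff_pow_eq_one.mpr ⟨n, hnpos, ?_⟩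
  have hker : ∀ γ : Γ, γ ∈ (ρ ^ n).ker := by
    have : (T : Set Γ) ⊆ (ρ ^ n).ker := by
      intro g hg
      have : orderOf (ρ g) ∣ n := Finset.dvd_prod_of_mem _ hg
      have := orderOf_dvd_iff_pow_eq_one.mp this
      simpa [MonoidHom.mem_ker] using this
    intro γ
    have : (⊤ : Subgroup Γ) ≤ (ρ ^ n).ker := by
      rw [← hT]
      exact (Subgroup.closure_le _).mpr this
    exact this (Subgroup.mem_top γ)
  refine MonoidHom.ext fun γ => ?_
  have h := hker γ
  rw [MonoidHom.mem_ker] at h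
  simpa using h
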